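/- Let S ⊆ ℝ^n be a linear subspace such that every v ∈ S satisfies ‖v‖_∞ ≤ √(ζ/n)·‖v‖₂, and let P : ℝ^n → ℝ^n be the orthogonal projection onto S. If r ∈ ℝ^n has at most s nonzero entries, then ‖P r‖_∞ ≤ √(ζ·s/n)·‖r‖₂. -/

import Mathlib

open Finset RealInnerProductSpace in
theorem stmt_3 {n : ℕ} (S : Submodule ℝ (EuclideanSpace ℝ (Fin n))) (ζ : ℝ) (hζ : 0 < ζ)
    (hdiff : ∀ v ∈ S, ∀ i, |v i| ≤ Real.sqrt (ζ / n) * ‖v‖)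
    (r : EuclideanSpace ℝ (Fin n)) (s : ℕ)
    (hsparse : (Finset.univ.filter fun i => r i ≠ 0).card ≤ s) :
    ∀ i, |(S.orthogonalProjectionOnto r : EuclideanSpace ℝ (Fin n)) i|
      ≤ Real.sqrt (ζ * s / n) * ‖r‖ := by
  intro i
  set T : Finset (Fin n) := Finset.univ.filter fun j => r j ≠ 0 with hT
  set u : EuclideanSpace ℝ (Fin n) :=
    (S.orthogonalProjectionOnto (EuclideanSpace.single i 1) : EuclideanSpace ℝ (Fin n)) with hu
  have huS : u ∈ S := (S.orthogonalProjectionOnto (EuclideanSpace.single i 1)).2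
  have hunorm : ‖u‖ ≤ 1 := by
    calc ‖u‖ ≤ ‖S.orthogonalProjectionOnto‖ * ‖EuclideanSpace.single i (1:ℝ)‖ :=
          (S.orthogonalProjectionOnto).le_opNorm _
    _ ≤ 1 * 1 := by
        apply mul_le_mul (Submodule.orthogonalProjectionOnto_norm_le S) (le_of_eq ?_) (norm_nonneg _) zero_le_one
        simp [EuclideanSpace.norm_single]
    _ = 1 := one_mul 1
  have key : (S.orthogonalProjectionOnto r : EuclideanSpace ℝ (Fin n)) i = (inner ℝ u r : ℝ) := by
    rw [hu, Submodule.coe_orthogonalProjectionOnto_apply, Submodule.coe_orthogonalProjectionOnto_apply,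
      Submodule.inner_starProjection_left_eq_right, EuclideanSpace.inner_single_left]
    simp
  have hub : ∀ j, |u j| ≤ Real.sqrt (ζ / n) := fun j =>
    le_trans (hdiff u huS j) (by nlinarith [Real.sqrt_nonneg (ζ / n), norm_nonneg u])
  have hsum : (inner ℝ u r : ℝ) = ∑ j ∈ T, u j * r j := by
    rw [PiLp.inner_apply]
    simp only [RCLike.inner_apply, starRingEnd_apply, star_trivial]
    rw [hT]
    rw [Finset.sum_congr rfl fun j _ => mul_comm (r j) (u j)]
    refine (Finset.sum_filter_of_ne ?_).symm
    intro j _ h hr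
    exact h (by rw [hr, mul_zero])
  -- sum of |r j| over T bound
  have hcs : ∑ j ∈ T, |r j| ≤ Real.sqrt s * ‖r‖ := by
    have h1 : (∑ j ∈ T, |r j|) ^ 2 ≤ (T.card : ℝ) * ∑ j ∈ T, |r j| ^ 2 := by
      exact_mod_cast sq_sum_le_card_mul_sum_sq (s := T) (f := fun j => |r j|)
    have h2 : ∑ j ∈ T, |r j| ^ 2 ≤ ‖r‖ ^ 2 := by
      have : ‖r‖ ^ 2 = ∑ j, r j ^ 2 := by
        rw [EuclideanSpace.norm_eq, Real.sq_sqrt (by positivity)]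
        simp [sq_abs]
      rw [this]
      simpa [sq_abs] using Finset.sum_le_sum_of_subset_of_nonneg (Finset.filter_subset _ _)
        (fun j _ _ => sq_nonneg (r j))
    have h3 : (∑ j ∈ T, |r j|) ^ 2 ≤ (s : ℝ) * ‖r‖ ^ 2 := by
      calc (∑ j ∈ T, |r j|) ^ 2 ≤ (T.card : ℝ) * ‖r‖ ^ 2 :=
            h1.trans (mul_le_mul_of_nonneg_left h2 (Nat.cast_nonneg _))
      _ ≤ (s : ℝ) * ‖r‖ ^ 2 := by
            apply mul_le_mul_of_nonneg_right _ (sq_nonneg _)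
            exact_mod_cast hsparse
    have h4 : (0:ℝ) ≤ ∑ j ∈ T, |r j| := Finset.sum_nonneg fun j _ => abs_nonneg _
    calc ∑ j ∈ T, |r j| = Real.sqrt ((∑ j ∈ T, |r j|) ^ 2) := (Real.sqrt_sq h4).symm
    _ ≤ Real.sqrt ((s : ℝ) * ‖r‖ ^ 2) := Real.sqrt_le_sqrt h3
    _ = Real.sqrt s * ‖r‖ := by
        rw [Real.sqrt_mul (Nat.cast_nonneg _), Real.sqrt_sq (norm_nonneg _)]
  calc |(S.orthogonalProjectionOnto r : EuclideanSpace ℝ (Fin n)) i|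
      = |∑ j ∈ T, u j * r j| := by rw [key, hsum]
  _ ≤ ∑ j ∈ T, |u j * r j| := Finset.abs_sum_le_sum_abs _ _
  _ ≤ ∑ j ∈ T, Real.sqrt (ζ / n) * |r j| := by
      apply Finset.sum_le_sum
      intro j _
      rw [abs_mul]
      exact mul_le_mul_of_nonneg_right (hub j) (abs_nonneg _)
  _ = Real.sqrt (ζ / n) * ∑ j ∈ T, |r j| := (Finset.mul_sum _ _ _).symm
  _ ≤ Real.sqrt (ζ / n) * (Real.sqrt s * ‖r‖) :=
      mul_le_mul_of_nonneg_left hcs (Real.sqrt_nonneg _)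
  _ = Real.sqrt (ζ * s / n) * ‖r‖ := by
      rw [← mul_assoc, ← Real.sqrt_mul (by positivity)]
      ring_nf
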